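/- Let r ≥ s ≥ 1 and let ξ_0, …, ξ_r be real numbers such that ξ_0, …, ξ_s are linearly independent over ℚ and each of ξ_{s+1}, …, ξ_r is a ℚ-linear combination of ξ_0, …, ξ_s. Then ω_0(ξ_0, …, ξ_r) = ω_0(ξ_0, …, ξ_s), where for a tuple η = (η_0, …, η_m) ∈ ℝ^{m+1}, ω_0(η) is the supremum of all ω > 0 such that there exist infinitely many tuples (q_0, …, q_m) ∈ ℤ^{m+1} with |q_i η_j − q_j η_i| ≤ max(|q_0|, …, |q_m|)^{−ω} for all 0 ≤ i < j ≤ m. -/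

import Mathlib

open Filter Topology

/-- `ω_0(ξ)`: the supremum (in the extended reals) of all `ω > 0` such that there are
infinitely many integer tuples `q` with `|q_i ξ_j - q_j ξ_i| ≤ (max_k |q_k|)^{-ω}`
for all `i < j`. -/
noncomputable def omega0 {n : ℕ} (ξ : Fin n → ℝ) : EReal :=
  sSup {x : EReal | ∃ ω : ℝ, 0 < ω ∧ x = (ω : EReal) ∧
    {q : Fin n → ℤ | ∀ i j : Fin n, i < j →
      |(q i : ℝ) * ξ j - (q j : ℝ) * ξ i| ≤
        ((Finset.univ.sup fun k => (q k).natAbs : ℕ) : ℝ) ^ (-ω)}.Infinite}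

/-- The solution set. -/
def solSet {n : ℕ} (ξ : Fin n → ℝ) (ω : ℝ) : Set (Fin n → ℤ) :=
  {q : Fin n → ℤ | ∀ i j : Fin n, i < j →
    |(q i : ℝ) * ξ j - (q j : ℝ) * ξ i| ≤
      ((Finset.univ.sup fun k => (q k).natAbs : ℕ) : ℝ) ^ (-ω)}

lemma omega0_def {n : ℕ} (ξ : Fin n → ℝ) :
    omega0 ξ = sSup {x : EReal | ∃ ω : ℝ, 0 < ω ∧ x = (ω : EReal) ∧ (solSet ξ ω).Infinite} :=
  rfl

/-- Height of an integer tuple. -/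
def ht {n : ℕ} (q : Fin n → ℤ) : ℕ := Finset.univ.sup fun k => (q k).natAbs

lemma natAbs_le_ht {n : ℕ} (q : Fin n → ℤ) (k : Fin n) : (q k).natAbs ≤ ht q :=
  Finset.le_sup (f := fun k => (q k).natAbs) (Finset.mem_univ k)

lemma cast_natAbs_eq {m : ℤ} : ((m.natAbs : ℕ) : ℝ) = |(m : ℝ)| := by
  rw [Nat.cast_natAbs, Int.cast_abs]

lemma abs_le_ht {n : ℕ} (q : Fin n → ℤ) (k : Fin n) : |(q k : ℝ)| ≤ (ht q : ℝ) := by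
  rw [← cast_natAbs_eq]
  exact_mod_cast natAbs_le_ht q k

lemma finite_bounded {n : ℕ} (B : Fin n → ℝ) :
    {q : Fin n → ℤ | ∀ k, |(q k : ℝ)| ≤ B k}.Finite := by
  have : {q : Fin n → ℤ | ∀ k, |(q k : ℝ)| ≤ B k} ⊆
      Set.pi Set.univ (fun k => Set.Icc (-⌈B k⌉) ⌈B k⌉) := by
    intro q hq k _
    have h1 := hq k
    have h2 : |(q k : ℝ)| ≤ (⌈B k⌉ : ℝ) := h1.trans (Int.le_ceil _)
    rw [abs_le] at h2
    constructor
    · exact_mod_cast h2.1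
    · exact_mod_cast h2.2
  exact Set.Finite.subset (Set.Finite.pi (fun k => Set.finite_Icc _ _)) this

/-- An infinite set of integer tuples contains infinitely many of height `≥ M`. -/
lemma infinite_large_ht {n : ℕ} {S : Set (Fin n → ℤ)} (hS : S.Infinite) (M : ℝ) :
    (S ∩ {q | M ≤ (ht q : ℝ)}).Infinite := by
  have hfin : {q : Fin n → ℤ | ¬ M ≤ (ht q : ℝ)}.Finite := by
    apply (finite_bounded (fun _ => M)).subset
    intro q hq k
    exact (abs_le_ht q k).trans (le_of_not_ge hq)
  have : S ∩ {q | M ≤ (ht q : ℝ)} = S \ {q : Fin n → ℤ | ¬ M ≤ (ht q : ℝ)} := by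
    ext q; simp [Set.mem_diff, not_not]
  rw [this]
  exact hS.diff hfin


section Restrict

variable {r s : ℕ} (h : s + 1 ≤ r + 1) (ξ : Fin (r + 1) → ℝ)

lemma ht_restrict_le (q : Fin (r + 1) → ℤ) :
    ht (fun i : Fin (s + 1) => q (Fin.castLE h i)) ≤ ht q := by
  apply Finset.sup_le
  intro i _
  exact natAbs_le_ht q _

lemma restrict_mem_solSet {ω : ℝ} (hω : 0 < ω) {q : Fin (r + 1) → ℤ}
    (hq : q ∈ solSet ξ ω) :
    (fun i : Fin (s + 1) => q (Fin.castLE h i)) ∈ solSet (fun i => ξ (Fin.castLE h i)) ω := by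
  intro i j hij
  set q' : Fin (s + 1) → ℤ := fun i => q (Fin.castLE h i) with hq'def
  have hij' : Fin.castLE h i < Fin.castLE h j := by
    rw [Fin.lt_def]
    simp only [Fin.coe_castLE]
    exact hij
  have h1 := hq _ _ hij'
  show |(q' i : ℝ) * ξ (Fin.castLE h j) - (q' j : ℝ) * ξ (Fin.castLE h i)| ≤ (ht q' : ℝ) ^ (-ω)
  rcases Nat.eq_zero_or_pos (ht q') with h0 | hpos
  · have hz : ∀ k, q' k = 0 := by
      intro k
      have hk := natAbs_le_ht q' k
      rw [h0, Nat.le_zero, Int.natAbs_eq_zero] at hk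
      exact hk
    rw [hz i, hz j, h0]
    simp [Real.zero_rpow (by linarith : -ω ≠ 0)]
  · have hle : (ht q' : ℝ) ≤ (ht q : ℝ) := by exact_mod_cast ht_restrict_le h q
    refine le_trans h1 ?_
    exact Real.rpow_le_rpow_of_nonpos (by exact_mod_cast hpos) hle (by linarith)

lemma fiber_finite {ω : ℝ} (hω : 0 < ω)
    (hξne : ∀ i : Fin (s + 1), ξ (Fin.castLE h i) ≠ 0) (q' : Fin (s + 1) → ℤ) :
    {q : Fin (r + 1) → ℤ | q ∈ solSet ξ ω ∧ (fun i => q (Fin.castLE h i)) = q'}.Finite := by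
  have hc0 : (Fin.castLE h (0 : Fin (s + 1))) = (0 : Fin (r + 1)) := rfl
  by_cases hq'0 : q' = 0
  · subst hq'0
    have hξ0 : ξ 0 ≠ 0 := by rw [← hc0]; exact hξne 0
    apply (finite_bounded (fun _ : Fin (r + 1) => 1 / |ξ 0|)).subset
    rintro q ⟨hsol, hrest⟩ k
    rcases eq_or_ne q 0 with rfl | hqne
    · simp
    · obtain ⟨k₀, -, hk₀⟩ := Finset.exists_mem_eq_sup Finset.univ ⟨0, Finset.mem_univ 0⟩
        (fun k => (q k).natAbs)
      obtain ⟨k₁, hk₁⟩ := Function.ne_iff.mp hqne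
      simp only [Pi.zero_apply] at hk₁
      have hht1 : 1 ≤ ht q := by
        have h1 : (q k₁).natAbs ≠ 0 := Int.natAbs_ne_zero.mpr hk₁
        have h2 := natAbs_le_ht q k₁
        omega
      have hq0 : q 0 = 0 := by
        have := congrFun hrest 0
        rw [hc0] at this
        simpa using this
      have hqk₀ : q k₀ ≠ 0 := by
        intro hz
        have : ht q = 0 := by rw [ht, hk₀, hz]; rfl
        omega
      have hk₀big : (0 : Fin (r + 1)) < k₀ := by
        rw [Fin.lt_def]
        simp only [Fin.val_zero]
        by_contra hcon
        push_neg at hcon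
        have hk₀0 : k₀ = 0 := Fin.ext (by simpa using Nat.le_zero.mp hcon)
        exact hqk₀ (hk₀0 ▸ hq0)
      have hs1 := hsol 0 k₀ hk₀big
      rw [hq0] at hs1
      have hht1' : (1 : ℝ) ≤ ((ht q : ℕ) : ℝ) := by exact_mod_cast hht1
      have hrle1 : ((ht q : ℕ) : ℝ) ^ (-ω) ≤ 1 :=
        Real.rpow_le_one_of_one_le_of_nonpos hht1' (by linarith)
      have hs2 : |(q k₀ : ℝ)| * |ξ 0| ≤ 1 := by
        have h3 := hs1.trans hrle1
        calc |(q k₀ : ℝ)| * |ξ 0| = |((0 : ℤ) : ℝ) * ξ k₀ - (q k₀ : ℝ) * ξ 0| := by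
              rw [Int.cast_zero, zero_mul, zero_sub, abs_neg, abs_mul]
          _ ≤ 1 := h3
      have hhtle : ((ht q : ℕ) : ℝ) ≤ 1 / |ξ 0| := by
        rw [le_div_iff₀ (abs_pos.mpr hξ0)]
        have he : ((ht q : ℕ) : ℝ) = |(q k₀ : ℝ)| := by
          rw [show ht q = (q k₀).natAbs from hk₀, cast_natAbs_eq]
        rw [he]
        exact hs2
      exact (abs_le_ht q k).trans hhtle
  · obtain ⟨i₀, hi₀⟩ := Function.ne_iff.mp hq'0
    simp only [Pi.zero_apply] at hi₀
    apply (finite_bounded (fun k : Fin (r + 1) =>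
      max ((ht q' : ℕ) : ℝ) ((|(q' i₀ : ℝ)| * |ξ k| + 1) / |ξ (Fin.castLE h i₀)|))).subset
    rintro q ⟨hsol, hrest⟩ k
    by_cases hk : (k : ℕ) < s + 1
    · have hck : Fin.castLE h ⟨(k : ℕ), hk⟩ = k := Fin.ext rfl
      have hqk : q k = q' ⟨(k : ℕ), hk⟩ := by
        have := congrFun hrest ⟨(k : ℕ), hk⟩
        rwa [hck] at this
      rw [hqk]
      exact le_max_of_le_left (abs_le_ht q' _)
    · have hlt : Fin.castLE h i₀ < k := by
        rw [Fin.lt_def]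
        have := i₀.isLt
        simp only [Fin.coe_castLE]
        omega
      have hqi₀ : q (Fin.castLE h i₀) = q' i₀ := congrFun hrest i₀
      have hht1 : 1 ≤ ht q := by
        have h1 : (q' i₀).natAbs ≠ 0 := Int.natAbs_ne_zero.mpr hi₀
        have h2 := natAbs_le_ht q (Fin.castLE h i₀)
        rw [hqi₀] at h2
        omega
      have hht1' : (1 : ℝ) ≤ ((ht q : ℕ) : ℝ) := by exact_mod_cast hht1
      have hrle1 : ((ht q : ℕ) : ℝ) ^ (-ω) ≤ 1 :=
        Real.rpow_le_one_of_one_le_of_nonpos hht1' (by linarith)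
      have hs1 := (hsol _ k hlt).trans hrle1
      rw [hqi₀] at hs1
      have habs : |(q k : ℝ) * ξ (Fin.castLE h i₀)| - |(q' i₀ : ℝ) * ξ k| ≤
          |(q' i₀ : ℝ) * ξ k - (q k : ℝ) * ξ (Fin.castLE h i₀)| := by
        rw [abs_sub_comm ((q' i₀ : ℝ) * ξ k)]
        exact abs_sub_abs_le_abs_sub _ _
      rw [abs_mul, abs_mul] at habs
      refine le_max_of_le_right ?_
      rw [le_div_iff₀ (abs_pos.mpr (hξne i₀))]
      linarith

end Restrict

theorem omega0_eq_omega0_of_span (r s : ℕ) (hs : 1 ≤ s) (hsr : s ≤ r)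
    (ξ : Fin (r + 1) → ℝ) (h : s + 1 ≤ r + 1)
    (hindep : LinearIndependent ℚ (fun i : Fin (s + 1) => ξ (Fin.castLE h i)))
    (hspan : ∀ j : Fin (r + 1), s < (j : ℕ) →
      ξ j ∈ Submodule.span ℚ (Set.range (fun i : Fin (s + 1) => ξ (Fin.castLE h i)))) :
    omega0 ξ = omega0 (fun i : Fin (s + 1) => ξ (Fin.castLE h i)) := by
  set ξ' : Fin (s + 1) → ℝ := fun i => ξ (Fin.castLE h i) with hξ'
  have hξ'ne : ∀ i, ξ' i ≠ 0 := fun i => hindep.ne_zero i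
  rw [omega0_def, omega0_def]
  apply le_antisymm
  · -- restriction direction
    apply sSup_le
    rintro x ⟨ω, hω, rfl, hinf⟩
    apply le_sSup
    refine ⟨ω, hω, rfl, ?_⟩
    -- the image of the restriction map is infinite
    have himg : ((fun q : Fin (r + 1) → ℤ => fun i : Fin (s + 1) => q (Fin.castLE h i)) ''
        solSet ξ ω) ⊆ solSet ξ' ω := by
      rintro _ ⟨q, hq, rfl⟩
      exact restrict_mem_solSet h ξ hω hq
    refine Set.Infinite.mono himg ?_
    by_contra hfin
    rw [Set.not_infinite] at hfin
    have hcover : solSet ξ ω ⊆ ⋃ q' ∈ ((fun q : Fin (r + 1) → ℤ =>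
        fun i : Fin (s + 1) => q (Fin.castLE h i)) '' solSet ξ ω),
        {q : Fin (r + 1) → ℤ | q ∈ solSet ξ ω ∧ (fun i => q (Fin.castLE h i)) = q'} := by
      intro q hq
      exact Set.mem_biUnion ⟨q, hq, rfl⟩ ⟨hq, rfl⟩
    exact hinf ((hfin.biUnion (fun q' _ => fiber_finite h ξ hω hξ'ne q')).subset hcover)
  · -- extension direction
    apply sSup_le
    rintro x ⟨ω, hω, rfl, hinf⟩
    -- construct integer coefficient matrix
    have hex : ∀ j : Fin (r + 1), ∃ cc : Fin (s + 1) → ℚ,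
        (∑ i, cc i • ξ' i) = ξ j ∧ (∀ hj : (j : ℕ) < s + 1, cc = Pi.single ⟨(j : ℕ), hj⟩ 1) := by
      intro j
      by_cases hj : (j : ℕ) < s + 1
      · refine ⟨Pi.single ⟨(j : ℕ), hj⟩ 1, ?_, fun _ => rfl⟩
        have hcast : Fin.castLE h ⟨(j : ℕ), hj⟩ = j := Fin.ext rfl
        simp only [Pi.single_apply, ite_smul, zero_smul, Finset.sum_ite_eq',
          Finset.mem_univ, if_true, one_smul]
        exact congrArg ξ hcast
      · obtain ⟨cc, hcc⟩ := (Submodule.mem_span_range_iff_exists_fun ℚ).mp (hspan j (by omega))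
        exact ⟨cc, hcc, fun hj' => absurd hj' hj⟩
    choose c hc hcs using hex
    have hDex : ∃ D : ℕ, 0 < D ∧ ∀ j i, ∃ a : ℤ, (a : ℚ) = c j i * D := by
      refine ⟨∏ j, ∏ i, (c j i).den, ?_, ?_⟩
      · exact Finset.prod_pos fun j _ => Finset.prod_pos fun i _ => (c j i).pos
      · intro j i
        have hdvd : (c j i).den ∣ ∏ j, ∏ i, (c j i).den :=
          dvd_trans (Finset.dvd_prod_of_mem (fun i => (c j i).den) (Finset.mem_univ i))
            (Finset.dvd_prod_of_mem (fun j => ∏ i, (c j i).den) (Finset.mem_univ j))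
        obtain ⟨m, hm⟩ := hdvd
        refine ⟨(c j i).num * m, ?_⟩
        push_cast [hm]
        rw [← Rat.mul_den_eq_num]
        ring
    obtain ⟨D, hDpos, hDa⟩ := hDex
    choose a ha using hDa
    have hDR : (0 : ℝ) < (D : ℝ) := by exact_mod_cast hDpos
    -- the relation over ℝ
    have hDξ : ∀ j, (D : ℝ) * ξ j = ∑ i, (a j i : ℝ) * ξ' i := by
      intro j
      have h2 : ((D : ℕ) : ℚ) • ξ j = ∑ i, (a j i : ℚ) • ξ' i := by
        rw [← hc j, Finset.smul_sum]
        refine Finset.sum_congr rfl fun i _ => ?_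
        rw [smul_smul]
        congr 1
        rw [ha j i]
        exact mul_comm _ _
      simp only [Rat.smul_def] at h2
      push_cast at h2
      exact h2
    -- a at small indices
    have hacast : ∀ (i : Fin (s + 1)) (k : Fin (s + 1)),
        a (Fin.castLE h i) k = if k = i then (D : ℤ) else 0 := by
      intro i k
      have hj : ((Fin.castLE h i : Fin (r + 1)) : ℕ) < s + 1 := by
        simp only [Fin.coe_castLE]; exact i.isLt
      have h1 := hcs (Fin.castLE h i) hj
      have h2 := ha (Fin.castLE h i) k
      rw [h1] at h2
      have hii : (⟨((Fin.castLE h i : Fin (r + 1)) : ℕ), hj⟩ : Fin (s + 1)) = i := Fin.ext rfl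
      rw [hii, Pi.single_apply] at h2
      by_cases hki : k = i
      · rw [if_pos hki] at h2 ⊢
        exact_mod_cast h2.trans (one_mul _)
      · rw [if_neg hki] at h2 ⊢
        exact_mod_cast h2.trans (zero_mul _)
    -- the extension map
    set Φ : (Fin (s + 1) → ℤ) → (Fin (r + 1) → ℤ) :=
      fun q' j => ∑ i, a j i * q' i with hΦdef
    have hΦcast : ∀ (q' : Fin (s + 1) → ℤ) (i : Fin (s + 1)),
        Φ q' (Fin.castLE h i) = D * q' i := by
      intro q' i
      rw [hΦdef]
      simp only [hacast, ite_mul, zero_mul, Finset.sum_ite_eq', Finset.mem_univ, if_true]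
    have hΦinj : Function.Injective Φ := by
      intro x y hxy
      funext i
      have h1 := congrFun hxy (Fin.castLE h i)
      rw [hΦcast, hΦcast] at h1
      exact mul_left_cancel₀ (by exact_mod_cast hDpos.ne' : (D : ℤ) ≠ 0) h1
    -- the constant A
    set A : ℝ := (∑ j, ∑ i, |(a j i : ℝ)|) + 1 with hAdef
    have hA1 : (1 : ℝ) ≤ A := by
      rw [hAdef]
      have : (0 : ℝ) ≤ ∑ j, ∑ i, |(a j i : ℝ)| :=
        Finset.sum_nonneg fun j _ => Finset.sum_nonneg fun i _ => abs_nonneg _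
      linarith
    have hApos : (0 : ℝ) < A := lt_of_lt_of_le one_pos hA1
    have hArow : ∀ j, (∑ i, |(a j i : ℝ)|) ≤ A := by
      intro j
      rw [hAdef]
      have h1 : (∑ i, |(a j i : ℝ)|) ≤ ∑ j, ∑ i, |(a j i : ℝ)| :=
        Finset.single_le_sum (f := fun j => ∑ i, |(a j i : ℝ)|)
          (fun j _ => Finset.sum_nonneg fun i _ => abs_nonneg _) (Finset.mem_univ j)
      linarith
    -- height bounds
    have hΦht_le : ∀ q', ((ht (Φ q') : ℕ) : ℝ) ≤ A * ((ht q' : ℕ) : ℝ) := by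
      intro q'
      obtain ⟨j₀, -, hj₀⟩ := Finset.exists_mem_eq_sup Finset.univ ⟨0, Finset.mem_univ 0⟩
        (fun j => (Φ q' j).natAbs)
      have he : ((ht (Φ q') : ℕ) : ℝ) = |(Φ q' j₀ : ℝ)| := by
        rw [show ht (Φ q') = (Φ q' j₀).natAbs from hj₀, cast_natAbs_eq]
      rw [he]
      have hΦr : (Φ q' j₀ : ℝ) = ∑ i, (a j₀ i : ℝ) * (q' i : ℝ) := by
        rw [hΦdef]; push_cast; rfl
      rw [hΦr]
      calc |∑ i, (a j₀ i : ℝ) * (q' i : ℝ)| ≤ ∑ i, |(a j₀ i : ℝ) * (q' i : ℝ)| :=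
            Finset.abs_sum_le_sum_abs _ _
        _ = ∑ i, |(a j₀ i : ℝ)| * |(q' i : ℝ)| := by simp [abs_mul]
        _ ≤ ∑ i, |(a j₀ i : ℝ)| * ((ht q' : ℕ) : ℝ) :=
            Finset.sum_le_sum fun i _ =>
              mul_le_mul_of_nonneg_left (abs_le_ht q' i) (abs_nonneg _)
        _ = (∑ i, |(a j₀ i : ℝ)|) * ((ht q' : ℕ) : ℝ) := (Finset.sum_mul _ _ _).symm
        _ ≤ A * ((ht q' : ℕ) : ℝ) :=
            mul_le_mul_of_nonneg_right (hArow j₀) (Nat.cast_nonneg _)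
    have hΦht_ge : ∀ q' : Fin (s + 1) → ℤ, ((ht q' : ℕ) : ℝ) ≤ ((ht (Φ q') : ℕ) : ℝ) := by
      intro q'
      have hnat : ht q' ≤ ht (Φ q') := by
        apply Finset.sup_le
        intro i _
        have h1 : (Φ q' (Fin.castLE h i)).natAbs = D * (q' i).natAbs := by
          rw [hΦcast, Int.natAbs_mul, Int.natAbs_natCast]
        have h2 := natAbs_le_ht (Φ q') (Fin.castLE h i)
        calc (q' i).natAbs ≤ D * (q' i).natAbs := Nat.le_mul_of_pos_left _ hDpos
          _ = (Φ q' (Fin.castLE h i)).natAbs := h1.symm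
          _ ≤ ht (Φ q') := h2
      exact_mod_cast hnat
    -- main estimate
    have hΦsol : ∀ q' ∈ solSet ξ' ω, ∀ j j' : Fin (r + 1),
        |(Φ q' j : ℝ) * ξ j' - (Φ q' j' : ℝ) * ξ j| ≤
          (A * A / D) * ((ht q' : ℕ) : ℝ) ^ (-ω) := by
      intro q' hq' j j'
      have hΦr : ∀ jj, (Φ q' jj : ℝ) = ∑ i, (a jj i : ℝ) * (q' i : ℝ) := by
        intro jj; rw [hΦdef]; push_cast; rfl
      have hPnn : (0 : ℝ) ≤ ((ht q' : ℕ) : ℝ) ^ (-ω) :=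
        Real.rpow_nonneg (Nat.cast_nonneg _) _
      have hpair : ∀ k l : Fin (s + 1),
          |(q' k : ℝ) * ξ' l - (q' l : ℝ) * ξ' k| ≤ ((ht q' : ℕ) : ℝ) ^ (-ω) := by
        intro k l
        rcases lt_trichotomy k l with hkl | rfl | hkl
        · exact hq' k l hkl
        · simpa using hPnn
        · rw [abs_sub_comm]; exact hq' l k hkl
      have hid : ((Φ q' j : ℝ) * ξ j' - (Φ q' j' : ℝ) * ξ j) * D =
          ∑ k, ∑ l, (a j k : ℝ) * (a j' l : ℝ) * ((q' k : ℝ) * ξ' l - (q' l : ℝ) * ξ' k) := by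
        have e1 := hDξ j
        have e2 := hDξ j'
        calc ((Φ q' j : ℝ) * ξ j' - (Φ q' j' : ℝ) * ξ j) * D
            = (Φ q' j : ℝ) * ((D : ℝ) * ξ j') - (Φ q' j' : ℝ) * ((D : ℝ) * ξ j) := by ring
          _ = (∑ k, (a j k : ℝ) * (q' k : ℝ)) * (∑ l, (a j' l : ℝ) * ξ' l)
              - (∑ l, (a j' l : ℝ) * (q' l : ℝ)) * (∑ k, (a j k : ℝ) * ξ' k) := by
              rw [e1, e2, hΦr j, hΦr j']
          _ = ∑ k, ∑ l, ((a j k : ℝ) * (q' k : ℝ)) * ((a j' l : ℝ) * ξ' l)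
              - ∑ l, ∑ k, ((a j' l : ℝ) * (q' l : ℝ)) * ((a j k : ℝ) * ξ' k) := by
              rw [Finset.sum_mul_sum, Finset.sum_mul_sum]
          _ = ∑ k, ∑ l, (((a j k : ℝ) * (q' k : ℝ)) * ((a j' l : ℝ) * ξ' l)
              - ((a j' l : ℝ) * (q' l : ℝ)) * ((a j k : ℝ) * ξ' k)) := by
              rw [Finset.sum_comm (s := Finset.univ) (t := Finset.univ)
                (f := fun l k => ((a j' l : ℝ) * (q' l : ℝ)) * ((a j k : ℝ) * ξ' k)),
                ← Finset.sum_sub_distrib]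
              exact Finset.sum_congr rfl fun k _ => (Finset.sum_sub_distrib _ _).symm
          _ = ∑ k, ∑ l, (a j k : ℝ) * (a j' l : ℝ) *
                ((q' k : ℝ) * ξ' l - (q' l : ℝ) * ξ' k) := by
              refine Finset.sum_congr rfl fun k _ => Finset.sum_congr rfl fun l _ => ?_
              ring
      have habs : |(Φ q' j : ℝ) * ξ j' - (Φ q' j' : ℝ) * ξ j| * D ≤
          A * A * ((ht q' : ℕ) : ℝ) ^ (-ω) := by
        have h1 : |((Φ q' j : ℝ) * ξ j' - (Φ q' j' : ℝ) * ξ j) * (D : ℝ)| =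
            |(Φ q' j : ℝ) * ξ j' - (Φ q' j' : ℝ) * ξ j| * D := by
          rw [abs_mul, abs_of_nonneg hDR.le]
        rw [← h1, hid]
        refine le_trans (Finset.abs_sum_le_sum_abs _ _) ?_
        refine le_trans (Finset.sum_le_sum fun k _ => Finset.abs_sum_le_sum_abs _ _) ?_
        have hterm : ∀ k l : Fin (s + 1),
            |(a j k : ℝ) * (a j' l : ℝ) * ((q' k : ℝ) * ξ' l - (q' l : ℝ) * ξ' k)| ≤
            |(a j k : ℝ)| * |(a j' l : ℝ)| * ((ht q' : ℕ) : ℝ) ^ (-ω) := by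
          intro k l
          rw [abs_mul, abs_mul]
          exact mul_le_mul_of_nonneg_left (hpair k l) (by positivity)
        refine le_trans (Finset.sum_le_sum fun k _ =>
          Finset.sum_le_sum fun l _ => hterm k l) ?_
        have hre : ∑ k, ∑ l, |(a j k : ℝ)| * |(a j' l : ℝ)| * ((ht q' : ℕ) : ℝ) ^ (-ω) =
            (∑ k, |(a j k : ℝ)|) * (∑ l, |(a j' l : ℝ)|) * ((ht q' : ℕ) : ℝ) ^ (-ω) := by
          rw [Finset.sum_mul_sum, Finset.sum_mul]
          refine Finset.sum_congr rfl fun k _ => ?_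
          rw [Finset.sum_mul]
        rw [hre]
        refine mul_le_mul_of_nonneg_right ?_ hPnn
        exact mul_le_mul (hArow j) (hArow j')
          (Finset.sum_nonneg fun l _ => abs_nonneg _) hApos.le
      rw [div_mul_eq_mul_div, le_div_iff₀ hDR]
      exact habs
    -- suffices: every 0 < ω'' < ω is attained for ξ
    have key : ∀ ω'' : ℝ, 0 < ω'' → ω'' < ω → (solSet ξ ω'').Infinite := by
      intro ω'' hω''0 hω''ω
      set e : ℝ := ω - ω'' with hedef
      have he : 0 < e := by rw [hedef]; linarith
      set C : ℝ := (A * A / D) * A ^ ω'' with hCdef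
      have hC : 0 < C := by
        rw [hCdef]
        have := Real.rpow_pos_of_pos hApos ω''
        positivity
      set M : ℝ := max 1 (C ^ (1 / e)) with hMdef
      have hM1 : (1 : ℝ) ≤ M := le_max_left _ _
      have hMe : C ≤ M ^ e := by
        have h1 : C = (C ^ (1 / e)) ^ e := by
          rw [← Real.rpow_mul hC.le, one_div_mul_cancel he.ne', Real.rpow_one]
        rw [h1]
        exact Real.rpow_le_rpow (Real.rpow_nonneg hC.le _) (le_max_right _ _) he.le
      have hbig := infinite_large_ht hinf M
      have himg_sub : Φ '' (solSet ξ' ω ∩ {q' | M ≤ ((ht q' : ℕ) : ℝ)}) ⊆ solSet ξ ω'' := by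
        rintro _ ⟨q', ⟨hq'sol, hq'M⟩, rfl⟩ i j hij
        have hH'1 : (1 : ℝ) ≤ ((ht q' : ℕ) : ℝ) := le_trans hM1 hq'M
        have hH'pos : (0 : ℝ) < ((ht q' : ℕ) : ℝ) := lt_of_lt_of_le one_pos hH'1
        have hH1 : (1 : ℝ) ≤ ((ht (Φ q') : ℕ) : ℝ) := le_trans hH'1 (hΦht_ge q')
        have hHpos : (0 : ℝ) < ((ht (Φ q') : ℕ) : ℝ) := lt_of_lt_of_le one_pos hH1
        have hHle : ((ht (Φ q') : ℕ) : ℝ) ≤ A * ((ht q' : ℕ) : ℝ) := hΦht_le q'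
        refine le_trans (hΦsol q' hq'sol i j) ?_
        have step1 : (A * ((ht q' : ℕ) : ℝ)) ^ (-ω'') ≤ ((ht (Φ q') : ℕ) : ℝ) ^ (-ω'') :=
          Real.rpow_le_rpow_of_nonpos hHpos hHle (by linarith)
        refine le_trans ?_ step1
        rw [Real.mul_rpow hApos.le hH'pos.le]
        have hsplit : ((ht q' : ℕ) : ℝ) ^ (-ω) =
            ((ht q' : ℕ) : ℝ) ^ (-e) * ((ht q' : ℕ) : ℝ) ^ (-ω'') := by
          rw [← Real.rpow_add hH'pos]
          congr 1
          rw [hedef]; ring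
        rw [hsplit]
        have h9 : (A * A / D) * ((ht q' : ℕ) : ℝ) ^ (-e) ≤ A ^ (-ω'') := by
          have hCle : C ≤ ((ht q' : ℕ) : ℝ) ^ e :=
            hMe.trans (Real.rpow_le_rpow (by linarith) hq'M he.le)
          have hApow : (0 : ℝ) < A ^ ω'' := Real.rpow_pos_of_pos hApos _
          have hHe : (0 : ℝ) < ((ht q' : ℕ) : ℝ) ^ e := Real.rpow_pos_of_pos hH'pos _
          rw [Real.rpow_neg hH'pos.le, Real.rpow_neg hApos.le]
          rw [← div_eq_mul_inv, inv_eq_one_div, div_le_div_iff₀ hHe hApow]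
          rw [hCdef] at hCle
          nlinarith [hCle, hApow.le]
        calc (A * A / D) * (((ht q' : ℕ) : ℝ) ^ (-e) * ((ht q' : ℕ) : ℝ) ^ (-ω''))
            = ((A * A / D) * ((ht q' : ℕ) : ℝ) ^ (-e)) * ((ht q' : ℕ) : ℝ) ^ (-ω'') := by
              ring
          _ ≤ A ^ (-ω'') * ((ht q' : ℕ) : ℝ) ^ (-ω'') := by
              exact mul_le_mul_of_nonneg_right h9 (Real.rpow_nonneg hH'pos.le _)
      exact Set.Infinite.mono himg_sub (hbig.image (hΦinj.injOn))
    -- dense argument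
    by_contra hcon
    push_neg at hcon
    have h0 : (0 : EReal) < (ω : EReal) := by exact_mod_cast hω
    obtain ⟨z, hz1, hz2⟩ := exists_between (max_lt h0 hcon : max 0 _ < (ω : EReal))
    have hz0 : (0 : EReal) < z := lt_of_le_of_lt (le_max_left _ _) hz1
    have hzbot : z ≠ ⊥ := fun hb => by simp [hb] at hz0
    have hztop : z ≠ ⊤ := fun ht => by
      rw [ht] at hz2; exact (not_top_lt hz2)
    have hzreal : z = ((z.toReal : ℝ) : EReal) := (EReal.coe_toReal hztop hzbot).symm
    have hz0' : 0 < z.toReal := by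
      rw [hzreal] at hz0; exact_mod_cast hz0
    have hzω : z.toReal < ω := by
      rw [hzreal] at hz2; exact_mod_cast hz2
    have := key z.toReal hz0' hzω
    have hle : z ≤ sSup {x : EReal | ∃ ω : ℝ, 0 < ω ∧ x = (ω : EReal) ∧ (solSet ξ ω).Infinite} := by
      rw [hzreal]; exact le_sSup ⟨z.toReal, hz0', rfl, this⟩
    exact absurd (lt_of_le_of_lt hle (lt_of_le_of_lt (le_max_right 0 _) hz1)) (lt_irrefl z)
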